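/- Let p > 1 and let q satisfy 1/p + 1/q = 1, let σ ∈ ℝ, and let h be a nonnegative Lebesgue-measurable function on (0,∞) with k(σ) := ∫₀^∞ h(t) t^{σ-1} dt satisfying 0 < k(σ) < ∞. Suppose c > 0 is a constant such that for every pair of nonnegative measurable functions f, g on (0,∞) with 0 < ∫₀^∞ x^{p(1-σ)-1} f(x)^p dx < ∞ and 0 < ∫₀^∞ y^{q(1-σ)-1} g(y)^q dy < ∞ one has ∫₀^∞ ∫₀^∞ h(x·y) f(x) g(y) dx dy < c · (∫₀^∞ x^{p(1-σ)-1} f(x)^p dx)^{1/p} · (∫₀^∞ y^{q(1-σ)-1} g(y)^q dy)^{1/q}. Then c ≥ k(σ); that is, the constant k(σ) in this Hilbert-type inequality is best possible. -/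

import Mathlib

open MeasureTheory Set Filter
open scoped ENNReal

lemma auxIoo {r : ℝ} (hr : 0 < r) :
    ∫⁻ x in Ioo (0:ℝ) 1, ENNReal.ofReal (x ^ (r - 1)) = ENNReal.ofReal (1 / r) := by
  rw [← ofReal_integral_eq_lintegral_ofReal
      (((intervalIntegrable_iff_integrableOn_Ioo_of_le zero_le_one).mp
        (intervalIntegral.intervalIntegrable_rpow' (by linarith))))
      ((ae_restrict_iff' measurableSet_Ioo).mpr
        (ae_of_all _ fun x hx => Real.rpow_nonneg hx.1.le _))]
  congr 1
  rw [← integral_Ioc_eq_integral_Ioo, ← intervalIntegral.integral_of_le zero_le_one,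
    integral_rpow (Or.inl (by linarith))]
  have h1 : r - 1 + 1 = r := by ring
  rw [h1, Real.one_rpow, Real.zero_rpow hr.ne']
  ring

lemma auxIoi {M ε : ℝ} (hM : 0 < M) (hε : 0 < ε) :
    ∫⁻ y in Ioi M, ENNReal.ofReal (y ^ (-ε - 1)) = ENNReal.ofReal (M ^ (-ε) / ε) := by
  rw [← ofReal_integral_eq_lintegral_ofReal (integrableOn_Ioi_rpow_of_lt (by linarith) hM)
      ((ae_restrict_iff' measurableSet_Ioi).mpr
        (ae_of_all _ fun x hx => Real.rpow_nonneg (hM.trans hx).le _))]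
  congr 1
  rw [integral_Ioi_rpow_of_lt (by linarith) hM]
  have h1 : -ε - 1 + 1 = -ε := by ring
  rw [h1]
  field_simp

lemma auxCov (F : ℝ → ℝ≥0∞) (hF : Measurable F) {y : ℝ} (hy : 0 < y) :
    ∫⁻ x in Ioo (0:ℝ) 1, F (x * y) = ENNReal.ofReal y⁻¹ * ∫⁻ t in Ioo (0:ℝ) y, F t := by
  have hpre : (· * y) ⁻¹' (Ioo (0:ℝ) y) = Ioo (0:ℝ) 1 := by
    rw [preimage_mul_const_Ioo₀ _ _ hy, zero_div, div_self hy.ne']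
  calc ∫⁻ x in Ioo (0:ℝ) 1, F (x * y)
      = ∫⁻ t, F t ∂((volume.restrict (Ioo (0:ℝ) 1)).map (· * y)) :=
        (lintegral_map hF (measurable_mul_const y)).symm
    _ = ∫⁻ t, F t ∂((volume.map (· * y)).restrict (Ioo (0:ℝ) y)) := by
        rw [Measure.restrict_map (measurable_mul_const y) measurableSet_Ioo, hpre]
    _ = ENNReal.ofReal y⁻¹ * ∫⁻ t in Ioo (0:ℝ) y, F t := by
        rw [Real.map_volume_mul_right hy.ne', Measure.restrict_smul, lintegral_smul_measure,
          abs_of_pos (inv_pos.mpr hy), smul_eq_mul]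

/-- The constant `k(σ)` in the Yang–Hilbert-type inequality is best possible: any `c > 0`
valid for all admissible `f, g` satisfies `c ≥ k(σ)`. -/
theorem stmt4 (p q σ : ℝ) (hp : 1 < p) (hpq : 1 / p + 1 / q = 1)
    (h : ℝ → ℝ) (hh : Measurable h) (hh0 : ∀ t ∈ Ioi (0 : ℝ), 0 ≤ h t)
    (hk0 : 0 < ∫⁻ t in Ioi (0 : ℝ), ENNReal.ofReal (h t * t ^ (σ - 1)))
    (hk1 : (∫⁻ t in Ioi (0 : ℝ), ENNReal.ofReal (h t * t ^ (σ - 1))) < ⊤)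
    (c : ℝ) (hc : 0 < c)
    (hbd : ∀ f g : ℝ → ℝ, Measurable f → Measurable g →
      (∀ x ∈ Ioi (0 : ℝ), 0 ≤ f x) → (∀ y ∈ Ioi (0 : ℝ), 0 ≤ g y) →
      0 < (∫⁻ x in Ioi (0 : ℝ), ENNReal.ofReal (x ^ (p * (1 - σ) - 1) * f x ^ p)) →
      (∫⁻ x in Ioi (0 : ℝ), ENNReal.ofReal (x ^ (p * (1 - σ) - 1) * f x ^ p)) < ⊤ →
      0 < (∫⁻ y in Ioi (0 : ℝ), ENNReal.ofReal (y ^ (q * (1 - σ) - 1) * g y ^ q)) →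
      (∫⁻ y in Ioi (0 : ℝ), ENNReal.ofReal (y ^ (q * (1 - σ) - 1) * g y ^ q)) < ⊤ →
      (∫⁻ y in Ioi (0 : ℝ), ∫⁻ x in Ioi (0 : ℝ), ENNReal.ofReal (h (x * y) * f x * g y))
        < ENNReal.ofReal c *
            (∫⁻ x in Ioi (0 : ℝ), ENNReal.ofReal (x ^ (p * (1 - σ) - 1) * f x ^ p)) ^ (1 / p) *
            (∫⁻ y in Ioi (0 : ℝ), ENNReal.ofReal (y ^ (q * (1 - σ) - 1) * g y ^ q)) ^ (1 / q)) :
    (∫⁻ t in Ioi (0 : ℝ), ENNReal.ofReal (h t * t ^ (σ - 1))) ≤ ENNReal.ofReal c := by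
  have hp0 : (0:ℝ) < p := lt_trans one_pos hp
  have hq0 : (0:ℝ) < q := by
    have h1 : 1 / p < 1 := by
      rw [div_lt_one hp0]; exact hp
    have : 0 < 1 / q := by linarith
    exact (one_div_pos).mp this
  -- Key estimate
  have key : ∀ ε : ℝ, 0 < ε → ∀ M : ℝ, 1 ≤ M →
      ENNReal.ofReal (M ^ (-ε)) *
        ∫⁻ t in Ioo (0:ℝ) M, ENNReal.ofReal (h t * t ^ (σ - 1 + ε / p)) ≤ ENNReal.ofReal c := by
    intro ε hε M hM
    have hM0 : (0:ℝ) < M := lt_of_lt_of_le one_pos hM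
    set a : ℝ := σ - 1 + ε / p with ha
    set b : ℝ := σ - 1 - ε / q with hb
    set f : ℝ → ℝ := fun x => if x ∈ Ioo (0:ℝ) 1 then x ^ a else 0 with hf
    set g : ℝ → ℝ := fun y => if y ∈ Ioi (1:ℝ) then y ^ b else 0 with hg
    have hfm : Measurable f := Measurable.ite measurableSet_Ioo
      (measurable_id.pow_const a) measurable_const
    have hgm : Measurable g := Measurable.ite measurableSet_Ioi
      (measurable_id.pow_const b) measurable_const
    have hfnn : ∀ x ∈ Ioi (0:ℝ), 0 ≤ f x := by
      intro x hx; simp only [hf]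
      split
      · exact Real.rpow_nonneg (le_of_lt (by assumption : x ∈ Ioo (0:ℝ) 1).1) _
      · exact le_rfl
    have hgnn : ∀ y ∈ Ioi (0:ℝ), 0 ≤ g y := by
      intro y hy; simp only [hg]
      split
      · exact Real.rpow_nonneg (le_of_lt (lt_trans one_pos (by assumption : y ∈ Ioi (1:ℝ)))) _
      · exact le_rfl
    -- norm of f
    have hNf : (∫⁻ x in Ioi (0 : ℝ), ENNReal.ofReal (x ^ (p * (1 - σ) - 1) * f x ^ p))
        = ENNReal.ofReal (1 / ε) := by
      have hcong : ∀ x ∈ Ioi (0:ℝ),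
          ENNReal.ofReal (x ^ (p * (1 - σ) - 1) * f x ^ p)
            = (Ioo (0:ℝ) 1).indicator (fun x => ENNReal.ofReal (x ^ (ε - 1))) x := by
        intro x hx
        have hx0 : (0:ℝ) < x := hx
        by_cases hx1 : x ∈ Ioo (0:ℝ) 1
        · rw [indicator_of_mem hx1]
          simp only [hf, if_pos hx1]
          rw [← Real.rpow_mul hx1.1.le, ← Real.rpow_add hx0]
          congr 2
          have hpne : p ≠ 0 := ne_of_gt hp0
          rw [ha]
          linear_combination (div_mul_cancel₀ ε hpne : ε / p * p = ε)
        · rw [indicator_of_notMem hx1]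
          simp only [hf, if_neg hx1]
          rw [Real.zero_rpow hp0.ne', mul_zero, ENNReal.ofReal_zero]
      rw [setLIntegral_congr_fun measurableSet_Ioi hcong,
        lintegral_indicator measurableSet_Ioo,
        Measure.restrict_restrict measurableSet_Ioo,
        inter_eq_left.mpr (fun x hx => hx.1), auxIoo hε]
    -- norm of g
    have hNg : (∫⁻ y in Ioi (0 : ℝ), ENNReal.ofReal (y ^ (q * (1 - σ) - 1) * g y ^ q))
        = ENNReal.ofReal (1 / ε) := by
      have hcong : ∀ y ∈ Ioi (0:ℝ),
          ENNReal.ofReal (y ^ (q * (1 - σ) - 1) * g y ^ q)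
            = (Ioi (1:ℝ)).indicator (fun y => ENNReal.ofReal (y ^ (-ε - 1))) y := by
        intro y hy
        have hy0 : (0:ℝ) < y := hy
        by_cases hy1 : y ∈ Ioi (1:ℝ)
        · rw [indicator_of_mem hy1]
          simp only [hg, if_pos hy1]
          rw [← Real.rpow_mul hy0.le, ← Real.rpow_add hy0]
          congr 2
          have hqne : q ≠ 0 := ne_of_gt hq0
          rw [hb]
          linear_combination -(div_mul_cancel₀ ε hqne : ε / q * q = ε)
        · rw [indicator_of_notMem hy1]
          simp only [hg, if_neg hy1]
          rw [Real.zero_rpow hq0.ne', mul_zero, ENNReal.ofReal_zero]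
      rw [setLIntegral_congr_fun measurableSet_Ioi hcong,
        lintegral_indicator measurableSet_Ioi,
        Measure.restrict_restrict measurableSet_Ioi,
        show Ioi (1:ℝ) ∩ Ioi (0:ℝ) = Ioi 1 from inter_eq_left.mpr (Ioi_subset_Ioi zero_le_one),
        auxIoi one_pos hε, Real.one_rpow]
    -- apply the hypothesis
    have hApos : (0:ℝ≥0∞) < ENNReal.ofReal (1 / ε) := ENNReal.ofReal_pos.mpr (by positivity)
    have hAne : ENNReal.ofReal (1 / ε) ≠ 0 := hApos.ne'
    have hAfin : ENNReal.ofReal (1 / ε) ≠ ⊤ := ENNReal.ofReal_ne_top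
    have hJ := hbd f g hfm hgm hfnn hgnn (by rw [hNf]; exact hApos) (by rw [hNf]; exact ENNReal.ofReal_lt_top)
      (by rw [hNg]; exact hApos) (by rw [hNg]; exact ENNReal.ofReal_lt_top)
    rw [hNf, hNg] at hJ
    have hRHS : ENNReal.ofReal c * (ENNReal.ofReal (1 / ε)) ^ (1 / p)
        * (ENNReal.ofReal (1 / ε)) ^ (1 / q) = ENNReal.ofReal (c / ε) := by
      rw [mul_assoc, ← ENNReal.rpow_add _ _ hAne hAfin, hpq, ENNReal.rpow_one,
        ← ENNReal.ofReal_mul hc.le]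
      congr 1
      rw [mul_one_div]
    rw [hRHS] at hJ
    -- lower bound the double integral
    set F : ℝ → ℝ≥0∞ := fun t => ENNReal.ofReal (h t * t ^ a) with hF
    have hFm : Measurable F := (hh.mul (measurable_id.pow_const a)).ennreal_ofReal
    set KM : ℝ≥0∞ := ∫⁻ t in Ioo (0:ℝ) M, F t with hKM
    have hInner : ∀ y ∈ Ioi M,
        (∫⁻ x in Ioi (0 : ℝ), ENNReal.ofReal (h (x * y) * f x * g y))
          = ENNReal.ofReal (y ^ (-ε - 1)) * ∫⁻ t in Ioo (0:ℝ) y, F t := by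
      intro y hy
      have hy1 : (1:ℝ) < y := lt_of_le_of_lt hM hy
      have hy1' : y ∈ Ioi (1:ℝ) := hy1
      have hy0 : (0:ℝ) < y := lt_trans one_pos hy1
      have hb' : b - a = -ε := by
        rw [ha, hb]
        have hpe : p ≠ 0 := hp0.ne'
        have hqe : q ≠ 0 := hq0.ne'
        have hsum : ε / q + ε / p = ε := by
          have h2 : ε * (1 / p + 1 / q) = ε * 1 := by rw [hpq]
          calc ε / q + ε / p = ε * (1 / p + 1 / q) := by ring
            _ = ε := by rw [hpq]; ring
        linarith
      have hcong : ∀ x ∈ Ioi (0:ℝ),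
          ENNReal.ofReal (h (x * y) * f x * g y)
            = (Ioo (0:ℝ) 1).indicator (fun x => F (x * y) * ENNReal.ofReal (y ^ (b - a))) x := by
        intro x hx
        have hx0 : (0:ℝ) < x := hx
        by_cases hx1 : x ∈ Ioo (0:ℝ) 1
        · rw [indicator_of_mem hx1]
          simp only [hf, hg, if_pos hx1, if_pos hy1', hF]
          have hxy0 : 0 < x * y := mul_pos hx0 hy0
          rw [← ENNReal.ofReal_mul (mul_nonneg (hh0 _ hxy0) (Real.rpow_nonneg hxy0.le _))]
          congr 1
          rw [Real.mul_rpow hx0.le hy0.le]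
          have : y ^ a * y ^ (b - a) = y ^ b := by
            rw [← Real.rpow_add hy0]; congr 1; ring
          calc h (x * y) * x ^ a * y ^ b = h (x * y) * x ^ a * (y ^ a * y ^ (b - a)) := by
                rw [this]
            _ = h (x * y) * (x ^ a * y ^ a) * y ^ (b - a) := by ring
        · rw [indicator_of_notMem hx1]
          simp only [hf, if_neg hx1]
          rw [mul_zero, zero_mul, ENNReal.ofReal_zero]
      rw [setLIntegral_congr_fun measurableSet_Ioi hcong,
        lintegral_indicator measurableSet_Ioo,
        Measure.restrict_restrict measurableSet_Ioo,
        show Ioo (0:ℝ) 1 ∩ Ioi (0:ℝ) = Ioo 0 1 from inter_eq_left.mpr Ioo_subset_Ioi_self,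
        lintegral_mul_const (f := fun x => F (x * y)) _ ((hFm.comp (measurable_mul_const y)) : Measurable fun x => F (x * y)),
        auxCov F hFm hy0,
        mul_comm (ENNReal.ofReal y⁻¹ * ∫⁻ t in Ioo (0:ℝ) y, F t) (ENNReal.ofReal (y ^ (b - a))),
        ← mul_assoc, ← ENNReal.ofReal_mul (Real.rpow_nonneg hy0.le _)]
      congr 2
      rw [← Real.rpow_neg_one y, ← Real.rpow_add hy0]
      congr 1
      rw [hb']
      ring
    have hlow : ENNReal.ofReal (M ^ (-ε) / ε) * KM
        ≤ ∫⁻ y in Ioi (0 : ℝ), ∫⁻ x in Ioi (0 : ℝ), ENNReal.ofReal (h (x * y) * f x * g y) := by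
      have h1 : ∫⁻ y in Ioi M, ENNReal.ofReal (y ^ (-ε - 1)) * KM
          ≤ ∫⁻ y in Ioi M, ∫⁻ x in Ioi (0 : ℝ), ENNReal.ofReal (h (x * y) * f x * g y) := by
        apply lintegral_mono_ae
        filter_upwards [ae_restrict_mem measurableSet_Ioi] with y hy
        rw [hInner y hy]
        exact mul_le_mul_right (lintegral_mono_set (Ioo_subset_Ioo_right (le_of_lt hy))) _
      calc ENNReal.ofReal (M ^ (-ε) / ε) * KM
          = ∫⁻ y in Ioi M, ENNReal.ofReal (y ^ (-ε - 1)) * KM := by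
            rw [lintegral_mul_const (f := fun y : ℝ => ENNReal.ofReal (y ^ (-ε - 1))) _ (((measurable_id.pow_const (-ε-1)).ennreal_ofReal) : Measurable fun y : ℝ => ENNReal.ofReal (y ^ (-ε - 1))), auxIoi hM0 hε]
        _ ≤ ∫⁻ y in Ioi M, ∫⁻ x in Ioi (0 : ℝ), ENNReal.ofReal (h (x * y) * f x * g y) := h1
        _ ≤ ∫⁻ y in Ioi (0 : ℝ), ∫⁻ x in Ioi (0 : ℝ), ENNReal.ofReal (h (x * y) * f x * g y) :=
            lintegral_mono_set (Ioi_subset_Ioi hM0.le)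
    have hfinal : ENNReal.ofReal (M ^ (-ε) / ε) * KM ≤ ENNReal.ofReal (c / ε) :=
      le_of_lt (lt_of_le_of_lt hlow hJ)
    calc ENNReal.ofReal (M ^ (-ε)) * KM
        = ENNReal.ofReal ε * (ENNReal.ofReal (M ^ (-ε) / ε) * KM) := by
          rw [← mul_assoc, ← ENNReal.ofReal_mul hε.le]
          congr 2
          field_simp
      _ ≤ ENNReal.ofReal ε * ENNReal.ofReal (c / ε) := mul_le_mul_right hfinal _
      _ = ENNReal.ofReal c := by
          rw [← ENNReal.ofReal_mul hε.le]
          congr 1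
          field_simp
  -- Step 2: for all 0 < δ, 1 ≤ M, the truncated integral is at most c
  have step2 : ∀ δ M : ℝ, 0 < δ → 1 ≤ M →
      (∫⁻ t in Ioo δ M, ENNReal.ofReal (h t * t ^ (σ - 1))) ≤ ENNReal.ofReal c := by
    intro δ M hδ hM
    have hM0 : (0:ℝ) < M := lt_of_lt_of_le one_pos hM
    set L : ℝ≥0∞ := ∫⁻ t in Ioo δ M, ENNReal.ofReal (h t * t ^ (σ - 1)) with hL
    have hLne : L ≠ ⊤ := by
      refine (lt_of_le_of_lt (lintegral_mono_set ?_) hk1).ne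
      intro t ht; exact lt_trans hδ ht.1
    have hstep : ∀ ε : ℝ, 0 < ε →
        ENNReal.ofReal (M ^ (-ε) * δ ^ (ε / p)) * L ≤ ENNReal.ofReal c := by
      intro ε hε
      have hKMge : ENNReal.ofReal (δ ^ (ε / p)) * L
          ≤ ∫⁻ t in Ioo (0:ℝ) M, ENNReal.ofReal (h t * t ^ (σ - 1 + ε / p)) := by
        rw [← lintegral_const_mul' _ _ ENNReal.ofReal_ne_top]
        refine le_trans (lintegral_mono_ae ?_) (lintegral_mono_set (fun t ht => ⟨lt_trans hδ ht.1, ht.2⟩))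
        filter_upwards [ae_restrict_mem measurableSet_Ioo] with t ht
        have ht0 : (0:ℝ) < t := lt_trans hδ ht.1
        rw [← ENNReal.ofReal_mul (Real.rpow_nonneg hδ.le _)]
        apply ENNReal.ofReal_le_ofReal
        rw [Real.rpow_add ht0]
        calc δ ^ (ε / p) * (h t * t ^ (σ - 1))
            ≤ t ^ (ε / p) * (h t * t ^ (σ - 1)) := by
              apply mul_le_mul_of_nonneg_right
                (Real.rpow_le_rpow hδ.le ht.1.le (by positivity))
                (mul_nonneg (hh0 t ht0) (Real.rpow_nonneg ht0.le _))
          _ = h t * (t ^ (σ - 1) * t ^ (ε / p)) := by ring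
      calc ENNReal.ofReal (M ^ (-ε) * δ ^ (ε / p)) * L
          = ENNReal.ofReal (M ^ (-ε)) * (ENNReal.ofReal (δ ^ (ε / p)) * L) := by
            rw [ENNReal.ofReal_mul (Real.rpow_nonneg hM0.le _), mul_assoc]
        _ ≤ ENNReal.ofReal (M ^ (-ε)) *
            ∫⁻ t in Ioo (0:ℝ) M, ENNReal.ofReal (h t * t ^ (σ - 1 + ε / p)) :=
            mul_le_mul_right hKMge _
        _ ≤ ENNReal.ofReal c := key ε hε M hM
    -- take the limit ε → 0⁺
    by_contra hlt
    push_neg at hlt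
    have htends : Tendsto (fun ε : ℝ => ENNReal.ofReal (M ^ (-ε) * δ ^ (ε / p)) * L)
        (nhdsWithin 0 (Ioi 0)) (nhds L) := by
      have hreal : Tendsto (fun ε : ℝ => M ^ (-ε) * δ ^ (ε / p)) (nhds 0) (nhds 1) := by
        have heq : (fun ε : ℝ => M ^ (-ε) * δ ^ (ε / p))
            = fun ε : ℝ => Real.exp ((Real.log δ / p - Real.log M) * ε) := by
          funext ε
          rw [Real.rpow_def_of_pos hM0, Real.rpow_def_of_pos hδ, ← Real.exp_add]
          congr 1
          field_simp
          ring
        rw [heq]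
        have : Continuous fun ε : ℝ => Real.exp ((Real.log δ / p - Real.log M) * ε) :=
          Real.continuous_exp.comp (continuous_const.mul continuous_id)
        have h0 := this.tendsto 0
        simpa using h0
      have henn : Tendsto (fun ε : ℝ => ENNReal.ofReal (M ^ (-ε) * δ ^ (ε / p)))
          (nhdsWithin 0 (Ioi 0)) (nhds 1) := by
        have := (ENNReal.continuous_ofReal.tendsto 1).comp (hreal.mono_left (nhdsWithin_le_nhds (s := Ioi (0:ℝ))))
        simpa [Function.comp_def] using this
      have := ENNReal.Tendsto.mul_const henn (Or.inr hLne)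
      simpa using this
    have hev : ∀ᶠ ε in nhdsWithin (0:ℝ) (Ioi 0),
        ENNReal.ofReal c < ENNReal.ofReal (M ^ (-ε) * δ ^ (ε / p)) * L :=
      htends.eventually (eventually_gt_nhds hlt)
    obtain ⟨ε, hε1, hε2⟩ := (hev.and self_mem_nhdsWithin).exists
    exact absurd (hstep ε hε2) (not_le.mpr hε1)
  -- Step 3: monotone convergence over Ioo (1/(n+1)) (n+1)
  set F : ℝ → ℝ≥0∞ := fun t => ENNReal.ofReal (h t * t ^ (σ - 1)) with hFdef
  have hFm : Measurable F := (hh.mul (measurable_id.pow_const (σ - 1))).ennreal_ofReal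
  set S : ℕ → Set ℝ := fun n => Ioo ((n + 1 : ℝ))⁻¹ (n + 1) with hSdef
  have hSmeas : ∀ n, MeasurableSet (S n) := fun n => measurableSet_Ioo
  have hptw : (Ioi (0:ℝ)).indicator F = fun t => ⨆ n, (S n).indicator F t := by
    funext t
    by_cases ht : 0 < t
    · have ht' : t ∈ Ioi (0:ℝ) := ht
      rw [indicator_of_mem ht']
      obtain ⟨N, hN⟩ := exists_nat_gt (max t⁻¹ t)
      have htN : t ∈ S N := by
        constructor
        · have h1 : t⁻¹ < (N:ℝ) + 1 := lt_trans (lt_of_le_of_lt (le_max_left _ _) hN) (by linarith)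
          have := (inv_lt_inv₀ (by positivity) (by positivity)).mpr h1
          rwa [inv_inv] at this
        · exact lt_trans (lt_of_le_of_lt (le_max_right _ _) hN) (by linarith)
      apply le_antisymm
      · exact le_iSup_of_le N (by rw [indicator_of_mem htN])
      · apply iSup_le
        intro n
        by_cases hmem : t ∈ S n
        · rw [indicator_of_mem hmem]
        · rw [indicator_of_notMem hmem]; exact zero_le
    · have h1 : t ∉ Ioi (0:ℝ) := ht
      rw [indicator_of_notMem h1]
      symm
      simp only [ENNReal.iSup_eq_zero]
      intro n
      apply indicator_of_notMem
      intro hmem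
      exact ht (lt_trans (by positivity) hmem.1)
  have hmono : Monotone fun n => (S n).indicator F := by
    intro n m hnm
    apply indicator_le_indicator_of_subset
    · apply Ioo_subset_Ioo
      · apply inv_anti₀ (by positivity)
        have : (n:ℝ) ≤ m := Nat.cast_le.mpr hnm
        linarith
      · have : (n:ℝ) ≤ m := Nat.cast_le.mpr hnm
        linarith
    · exact fun x => zero_le
  calc (∫⁻ t in Ioi (0 : ℝ), F t)
      = ∫⁻ t, (Ioi (0:ℝ)).indicator F t := (lintegral_indicator measurableSet_Ioi F).symm
    _ = ∫⁻ t, ⨆ n, (S n).indicator F t := by rw [hptw]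
    _ = ⨆ n, ∫⁻ t, (S n).indicator F t :=
        lintegral_iSup (fun n => hFm.indicator (hSmeas n)) hmono
    _ = ⨆ n, ∫⁻ t in S n, F t := by
        congr 1; funext n; exact lintegral_indicator (hSmeas n) F
    _ ≤ ENNReal.ofReal c := by
        apply iSup_le
        intro n
        exact step2 _ _ (by positivity) (by linarith [Nat.cast_nonneg (α := ℝ) n])
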